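/- The ergodic capacity C̄(ρ, N) = ρ ∫_0^∞ (1 - (1-e^{-x})^N)/(1+ρx) dx is a concave increasing function of N > 0, and hence for any ℕ-valued random variable 𝒩 with mean λ, E[C̄(ρ, 𝒩)] ≤ C̄(ρ, λ) (Jensen's inequality): randomizing the number of users can only reduce ergodic capacity. -/

import Mathlib

open MeasureTheory

/-- The ergodic capacity `C̄(ρ,N) = ρ ∫_0^∞ (1-(1-e^{-x})^N)/(1+ρx) dx` of the
best of `N` users with Rayleigh fading. -/
noncomputable def ergodicCapacity (ρ N : ℝ) : ℝ :=
  ρ * ∫ x in Set.Ioi (0 : ℝ), (1 - (1 - Real.exp (-x)) ^ N) / (1 + ρ * x)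

namespace ErgCapAux

open Real Set

lemma t_pos {x : ℝ} (hx : 0 < x) : 0 < 1 - Real.exp (-x) := by
  have : Real.exp (-x) < 1 := by
    rw [Real.exp_lt_one_iff]; linarith
  linarith

lemma t_lt_one (x : ℝ) : 1 - Real.exp (-x) < 1 := by
  have := Real.exp_pos (-x); linarith

lemma denom_pos {ρ x : ℝ} (hρ : 0 < ρ) (hx : 0 < x) : 0 < 1 + ρ * x := by
  nlinarith

/-- tangent line inequality for `t ^ ·` at `lam`. -/
lemma tangent {t : ℝ} (h0 : 0 < t) (N lam : ℝ) :
    t ^ lam * (1 + Real.log t * (N - lam)) ≤ t ^ N := by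
  rw [Real.rpow_def_of_pos h0, Real.rpow_def_of_pos h0]
  have h1 : Real.log t * (N - lam) + 1 ≤ Real.exp (Real.log t * (N - lam)) :=
    Real.add_one_le_exp _
  calc Real.exp (Real.log t * lam) * (1 + Real.log t * (N - lam))
      ≤ Real.exp (Real.log t * lam) * Real.exp (Real.log t * (N - lam)) := by
        apply mul_le_mul_of_nonneg_left (by linarith) (Real.exp_pos _).le
    _ = Real.exp (Real.log t * N) := by rw [← Real.exp_add]; ring_nf

/-- `1 - t^N ≤ N * (-log t)`. -/
lemma one_sub_rpow_le {t : ℝ} (h0 : 0 < t) (N : ℝ) :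
    1 - t ^ N ≤ N * (-Real.log t) := by
  have := tangent h0 N 0
  simp only [Real.rpow_zero, one_mul, sub_zero] at this
  nlinarith

/-- `-log t ≤ (1-t)/t`. -/
lemma neg_log_le {t : ℝ} (h0 : 0 < t) : -Real.log t ≤ (1 - t) / t := by
  have h := Real.log_le_sub_one_of_pos (inv_pos.mpr h0)
  rw [Real.log_inv] at h
  have : t⁻¹ - 1 = (1 - t) / t := by field_simp
  linarith [this ▸ h]

/-- `-log t ≤ t^(-p) / p` for `p > 0`. -/
lemma neg_log_le_rpow {t p : ℝ} (h0 : 0 < t) (hp : 0 < p) :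
    -Real.log t ≤ t ^ (-p) / p := by
  have h := Real.log_le_sub_one_of_pos (Real.rpow_pos_of_pos h0 (-p))
  rw [Real.log_rpow h0] at h
  rw [le_div_iff₀ hp]
  nlinarith [Real.rpow_pos_of_pos h0 (-p)]

/-- generic integrability criterion on `(0,∞)`: bounded near 0, exp decay at ∞. -/
lemma integrable_helper {F : ℝ → ℝ} (hm : Measurable F) (C1 C2 : ℝ)
    (h1 : ∀ x ∈ Set.Ioc (0:ℝ) 1, ‖F x‖ ≤ C1)
    (h2 : ∀ x ∈ Set.Ioi (1:ℝ), ‖F x‖ ≤ C2 * Real.exp (-x)) :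
    IntegrableOn F (Set.Ioi (0:ℝ)) := by
  have hunion : Set.Ioc (0:ℝ) 1 ∪ Set.Ioi 1 = Set.Ioi 0 :=
    Set.Ioc_union_Ioi_eq_Ioi zero_le_one
  rw [← hunion]
  apply IntegrableOn.union
  · apply Measure.integrableOn_of_bounded (M := C1)
    · simp [Real.volume_Ioc]
    · exact hm.aestronglyMeasurable
    · rw [ae_restrict_iff' measurableSet_Ioc]
      filter_upwards with x hx using h1 x hx
  · have hexp : IntegrableOn (fun x => C2 * Real.exp (-x)) (Set.Ioi (1:ℝ)) := by
      have := (exp_neg_integrableOn_Ioi 1 (b := 1) one_pos).const_mul C2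
      simpa [IntegrableOn] using this
    apply Integrable.mono' hexp hm.aestronglyMeasurable.restrict
    rw [ae_restrict_iff' measurableSet_Ioi]
    filter_upwards with x hx using h2 x hx

lemma continuous_t : Continuous (fun x : ℝ => 1 - Real.exp (-x)) :=
  continuous_const.sub (Real.continuous_exp.comp continuous_neg)

lemma measurable_tN {N : ℝ} (hN : 0 ≤ N) :
    Measurable (fun x : ℝ => (1 - Real.exp (-x)) ^ N) :=
  (continuous_t.rpow_const (fun _ => Or.inr hN)).measurable

lemma measurable_fN (ρ : ℝ) {N : ℝ} (hN : 0 ≤ N) :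
    Measurable (fun x => (1 - (1 - Real.exp (-x)) ^ N) / (1 + ρ * x)) := by
  apply Measurable.div
  · exact measurable_const.sub (measurable_tN hN)
  · exact measurable_const.add (measurable_const.mul measurable_id)

lemma fN_nonneg {ρ : ℝ} (hρ : 0 < ρ) {N : ℝ} (hN : 0 ≤ N) {x : ℝ} (hx : 0 < x) :
    0 ≤ (1 - (1 - Real.exp (-x)) ^ N) / (1 + ρ * x) := by
  apply div_nonneg _ (denom_pos hρ hx).le
  have : (1 - Real.exp (-x)) ^ N ≤ 1 :=
    Real.rpow_le_one (t_pos hx).le (t_lt_one x).le hN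
  linarith

/-- integrability of the capacity integrand for `N ≥ 0`. -/
lemma integrable_fN {ρ : ℝ} (hρ : 0 < ρ) {N : ℝ} (hN : 0 ≤ N) :
    IntegrableOn (fun x => (1 - (1 - Real.exp (-x)) ^ N) / (1 + ρ * x))
      (Set.Ioi (0:ℝ)) := by
  apply integrable_helper (measurable_fN ρ hN) 1 (N / (1 - Real.exp (-1)))
  · intro x hx
    have hx0 : 0 < x := hx.1
    rw [Real.norm_eq_abs, abs_of_nonneg (fN_nonneg hρ hN hx0),
      div_le_one (denom_pos hρ hx0)]
    nlinarith [Real.rpow_pos_of_pos (t_pos hx0) N]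
  · intro x hx
    have hx1 : (1:ℝ) < x := hx
    have hx0 : (0:ℝ) < x := lt_trans one_pos hx1
    have ht0 := t_pos hx0
    have ht1 := t_lt_one x
    have hnum : 0 ≤ 1 - (1 - Real.exp (-x)) ^ N := by
      have := Real.rpow_le_one ht0.le ht1.le hN; linarith
    have hd : 1 ≤ 1 + ρ * x := by nlinarith
    rw [Real.norm_eq_abs, abs_of_nonneg (fN_nonneg hρ hN hx0)]
    have hstep1 : (1 - (1 - Real.exp (-x)) ^ N) / (1 + ρ * x)
        ≤ 1 - (1 - Real.exp (-x)) ^ N := div_le_self hnum hd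
    have hstep2 : 1 - (1 - Real.exp (-x)) ^ N
        ≤ N * (-Real.log (1 - Real.exp (-x))) := one_sub_rpow_le ht0 N
    have hlog : -Real.log (1 - Real.exp (-x))
        ≤ (1 - (1 - Real.exp (-x))) / (1 - Real.exp (-x)) := neg_log_le ht0
    have he : Real.exp (-x) ≤ Real.exp (-1) := Real.exp_le_exp.mpr (by linarith)
    have he1 : (0:ℝ) < 1 - Real.exp (-1) := t_pos one_pos
    have hfrac : (1 - (1 - Real.exp (-x))) / (1 - Real.exp (-x))
        ≤ Real.exp (-x) / (1 - Real.exp (-1)) := by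
      rw [sub_sub_cancel]
      gcongr <;> linarith [Real.exp_pos (-x)]
    calc (1 - (1 - Real.exp (-x)) ^ N) / (1 + ρ * x)
        ≤ N * (-Real.log (1 - Real.exp (-x))) := le_trans hstep1 hstep2
      _ ≤ N * (Real.exp (-x) / (1 - Real.exp (-1))) := by
          apply mul_le_mul_of_nonneg_left (le_trans hlog hfrac) hN
      _ = N / (1 - Real.exp (-1)) * Real.exp (-x) := by ring

lemma measurable_g (ρ : ℝ) {lam : ℝ} (hlam : 0 ≤ lam) :
    Measurable (fun x => -Real.log (1 - Real.exp (-x)) * (1 - Real.exp (-x)) ^ lam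
      / (1 + ρ * x)) := by
  apply Measurable.div
  · exact ((Real.measurable_log.comp continuous_t.measurable).neg.mul
      (measurable_tN hlam))
  · exact measurable_const.add (measurable_const.mul measurable_id)

lemma g_nonneg {ρ : ℝ} (hρ : 0 < ρ) (lam : ℝ) {x : ℝ} (hx : 0 < x) :
    0 ≤ -Real.log (1 - Real.exp (-x)) * (1 - Real.exp (-x)) ^ lam / (1 + ρ * x) := by
  have ht0 := t_pos hx
  have ht1 := t_lt_one x
  apply div_nonneg _ (denom_pos hρ hx).le
  apply mul_nonneg _ (Real.rpow_nonneg ht0.le lam)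
  simpa using Real.log_nonpos ht0.le ht1.le

lemma integrable_g {ρ : ℝ} (hρ : 0 < ρ) {lam : ℝ} (hlam : 0 < lam) :
    IntegrableOn (fun x => -Real.log (1 - Real.exp (-x)) * (1 - Real.exp (-x)) ^ lam
      / (1 + ρ * x)) (Set.Ioi (0:ℝ)) := by
  apply integrable_helper (measurable_g ρ hlam.le) (2 / lam) (1 / (1 - Real.exp (-1)))
  · intro x hx
    have hx0 : 0 < x := hx.1
    have ht0 := t_pos hx0
    have ht1 := t_lt_one x
    have hnum : 0 ≤ -Real.log (1 - Real.exp (-x)) * (1 - Real.exp (-x)) ^ lam := by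
      apply mul_nonneg _ (Real.rpow_nonneg ht0.le lam)
      simpa using Real.log_nonpos ht0.le ht1.le
    have hd : 1 ≤ 1 + ρ * x := by nlinarith
    rw [Real.norm_eq_abs, abs_of_nonneg (g_nonneg hρ lam hx0)]
    have hstep1 : -Real.log (1 - Real.exp (-x)) * (1 - Real.exp (-x)) ^ lam / (1 + ρ * x)
        ≤ -Real.log (1 - Real.exp (-x)) * (1 - Real.exp (-x)) ^ lam :=
      div_le_self hnum hd
    have h2 : -Real.log (1 - Real.exp (-x)) ≤ (1 - Real.exp (-x)) ^ (-(lam/2)) / (lam/2) :=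
      neg_log_le_rpow ht0 (by linarith)
    have h3 : -Real.log (1 - Real.exp (-x)) * (1 - Real.exp (-x)) ^ lam
        ≤ ((1 - Real.exp (-x)) ^ (-(lam/2)) / (lam/2)) * (1 - Real.exp (-x)) ^ lam :=
      mul_le_mul_of_nonneg_right h2 (Real.rpow_nonneg ht0.le lam)
    have h4 : ((1 - Real.exp (-x)) ^ (-(lam/2)) / (lam/2)) * (1 - Real.exp (-x)) ^ lam
        = (1 - Real.exp (-x)) ^ (lam/2) / (lam/2) := by
      rw [div_mul_eq_mul_div, ← Real.rpow_add ht0, show -(lam/2) + lam = lam/2 by ring]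
    have h5 : (1 - Real.exp (-x)) ^ (lam/2) ≤ 1 :=
      Real.rpow_le_one ht0.le ht1.le (by linarith)
    have h6 : (1 - Real.exp (-x)) ^ (lam/2) / (lam/2) ≤ 1 / (lam/2) := by
      gcongr <;> linarith
    calc -Real.log (1 - Real.exp (-x)) * (1 - Real.exp (-x)) ^ lam / (1 + ρ * x)
        ≤ ((1 - Real.exp (-x)) ^ (-(lam/2)) / (lam/2)) * (1 - Real.exp (-x)) ^ lam :=
          le_trans hstep1 h3
      _ = (1 - Real.exp (-x)) ^ (lam/2) / (lam/2) := h4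
      _ ≤ 1 / (lam/2) := h6
      _ = 2 / lam := one_div_div lam 2
  · intro x hx
    have hx1 : (1:ℝ) < x := hx
    have hx0 : (0:ℝ) < x := lt_trans one_pos hx1
    have ht0 := t_pos hx0
    have ht1 := t_lt_one x
    have hd : 1 ≤ 1 + ρ * x := by nlinarith
    rw [Real.norm_eq_abs, abs_of_nonneg (g_nonneg hρ lam hx0)]
    have hnum : 0 ≤ -Real.log (1 - Real.exp (-x)) * (1 - Real.exp (-x)) ^ lam := by
      apply mul_nonneg _ (Real.rpow_nonneg ht0.le lam)
      simpa using Real.log_nonpos ht0.le ht1.le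
    have hlog0 : 0 ≤ -Real.log (1 - Real.exp (-x)) := by
      simpa using Real.log_nonpos ht0.le ht1.le
    have hstep1 : -Real.log (1 - Real.exp (-x)) * (1 - Real.exp (-x)) ^ lam / (1 + ρ * x)
        ≤ -Real.log (1 - Real.exp (-x)) * (1 - Real.exp (-x)) ^ lam :=
      div_le_self hnum hd
    have hstep2 : -Real.log (1 - Real.exp (-x)) * (1 - Real.exp (-x)) ^ lam
        ≤ -Real.log (1 - Real.exp (-x)) := by
      have := Real.rpow_le_one ht0.le ht1.le hlam.le
      nlinarith
    have hlog : -Real.log (1 - Real.exp (-x))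
        ≤ (1 - (1 - Real.exp (-x))) / (1 - Real.exp (-x)) := neg_log_le ht0
    have he : Real.exp (-x) ≤ Real.exp (-1) := Real.exp_le_exp.mpr (by linarith)
    have he1 : (0:ℝ) < 1 - Real.exp (-1) := t_pos one_pos
    have hfrac : (1 - (1 - Real.exp (-x))) / (1 - Real.exp (-x))
        ≤ Real.exp (-x) / (1 - Real.exp (-1)) := by
      rw [sub_sub_cancel]
      gcongr <;> linarith [Real.exp_pos (-x)]
    calc -Real.log (1 - Real.exp (-x)) * (1 - Real.exp (-x)) ^ lam / (1 + ρ * x)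
        ≤ -Real.log (1 - Real.exp (-x)) := le_trans hstep1 hstep2
      _ ≤ Real.exp (-x) / (1 - Real.exp (-1)) := le_trans hlog hfrac
      _ = 1 / (1 - Real.exp (-1)) * Real.exp (-x) := by ring

lemma capacity_nonneg {ρ : ℝ} (hρ : 0 < ρ) {N : ℝ} (hN : 0 ≤ N) :
    0 ≤ ergodicCapacity ρ N := by
  apply mul_nonneg hρ.le
  apply setIntegral_nonneg measurableSet_Ioi
  intro x hx
  exact fN_nonneg hρ hN hx

/-- the tangent-line bound for the capacity itself. -/
lemma capacity_tangent {ρ : ℝ} (hρ : 0 < ρ) {lam : ℝ} (hlam : 0 < lam)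
    {N : ℝ} (hN : 0 ≤ N) :
    ergodicCapacity ρ N ≤ ergodicCapacity ρ lam + (N - lam) *
      (ρ * ∫ x in Set.Ioi (0:ℝ),
        -Real.log (1 - Real.exp (-x)) * (1 - Real.exp (-x)) ^ lam / (1 + ρ * x)) := by
  have hG := integrable_g hρ hlam
  have hF := integrable_fN hρ hN
  have hFlam := integrable_fN hρ hlam.le
  have hkey : ∫ x in Set.Ioi (0:ℝ), (1 - (1 - Real.exp (-x)) ^ N) / (1 + ρ * x)
      ≤ ∫ x in Set.Ioi (0:ℝ), ((1 - (1 - Real.exp (-x)) ^ lam) / (1 + ρ * x)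
        + (N - lam) * (-Real.log (1 - Real.exp (-x)) * (1 - Real.exp (-x)) ^ lam
          / (1 + ρ * x))) := by
    apply setIntegral_mono_on hF (hFlam.add (hG.const_mul (N - lam))) measurableSet_Ioi
    intro x hx
    have hx0 : (0:ℝ) < x := hx
    have ht0 := t_pos hx0
    have hd := denom_pos hρ hx0
    have htan := tangent ht0 N lam
    have hnum : 1 - (1 - Real.exp (-x)) ^ N
        ≤ 1 - (1 - Real.exp (-x)) ^ lam + (N - lam) *
          (-Real.log (1 - Real.exp (-x)) * (1 - Real.exp (-x)) ^ lam) := by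
      nlinarith [htan]
    have hform : (1 - (1 - Real.exp (-x)) ^ lam) / (1 + ρ * x)
        + (N - lam) * (-Real.log (1 - Real.exp (-x)) * (1 - Real.exp (-x)) ^ lam
          / (1 + ρ * x))
        = (1 - (1 - Real.exp (-x)) ^ lam + (N - lam) *
            (-Real.log (1 - Real.exp (-x)) * (1 - Real.exp (-x)) ^ lam)) / (1 + ρ * x) := by
      ring
    refine le_trans ?_ (le_of_eq hform.symm)
    rw [div_le_div_iff_of_pos_right hd]
    exact hnum
  have hsplit : ∫ x in Set.Ioi (0:ℝ), ((1 - (1 - Real.exp (-x)) ^ lam) / (1 + ρ * x)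
        + (N - lam) * (-Real.log (1 - Real.exp (-x)) * (1 - Real.exp (-x)) ^ lam
          / (1 + ρ * x)))
      = (∫ x in Set.Ioi (0:ℝ), (1 - (1 - Real.exp (-x)) ^ lam) / (1 + ρ * x))
        + (N - lam) * ∫ x in Set.Ioi (0:ℝ),
            -Real.log (1 - Real.exp (-x)) * (1 - Real.exp (-x)) ^ lam / (1 + ρ * x) := by
    rw [integral_add hFlam (hG.const_mul _), integral_const_mul]
  rw [ergodicCapacity, ergodicCapacity]
  calc ρ * ∫ x in Set.Ioi (0:ℝ), (1 - (1 - Real.exp (-x)) ^ N) / (1 + ρ * x)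
      ≤ ρ * ((∫ x in Set.Ioi (0:ℝ), (1 - (1 - Real.exp (-x)) ^ lam) / (1 + ρ * x))
        + (N - lam) * ∫ x in Set.Ioi (0:ℝ),
            -Real.log (1 - Real.exp (-x)) * (1 - Real.exp (-x)) ^ lam / (1 + ρ * x)) := by
        apply mul_le_mul_of_nonneg_left (hkey.trans_eq hsplit) hρ.le
    _ = ρ * (∫ x in Set.Ioi (0:ℝ), (1 - (1 - Real.exp (-x)) ^ lam) / (1 + ρ * x))
        + (N - lam) * (ρ * ∫ x in Set.Ioi (0:ℝ),
            -Real.log (1 - Real.exp (-x)) * (1 - Real.exp (-x)) ^ lam / (1 + ρ * x)) := by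
        ring

end ErgCapAux

/-- `C̄(ρ,·)` is increasing and concave on `(0,∞)`; hence by Jensen's
inequality, for any ℕ-valued random number of users `𝒩` (pmf `a`) with mean
`λ`, `E[C̄(ρ,𝒩)] ≤ C̄(ρ,λ)`: randomizing the number of users reduces
ergodic capacity. -/
theorem ergodic_capacity_concave_jensen (ρ : ℝ) (hρ : 0 < ρ) :
    MonotoneOn (ergodicCapacity ρ) (Set.Ioi 0) ∧
    ConcaveOn ℝ (Set.Ioi 0) (ergodicCapacity ρ) ∧
    ∀ (a : ℕ → ℝ) (lam : ℝ), (∀ k, 0 ≤ a k) → HasSum a 1 →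
      HasSum (fun k : ℕ => (k : ℝ) * a k) lam →
      ∑' k : ℕ, a k * ergodicCapacity ρ k ≤ ergodicCapacity ρ lam := by
  refine ⟨?_, ?_, ?_⟩
  · -- Monotone
    intro M hM N hN hMN
    have hM0 : (0:ℝ) < M := hM
    have hN0 : (0:ℝ) < N := hN
    rw [ergodicCapacity, ergodicCapacity]
    apply mul_le_mul_of_nonneg_left _ hρ.le
    apply setIntegral_mono_on (ErgCapAux.integrable_fN hρ hM0.le)
      (ErgCapAux.integrable_fN hρ hN0.le) measurableSet_Ioi
    intro x hx
    have hx0 : (0:ℝ) < x := hx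
    have hmono := Real.rpow_le_rpow_of_exponent_ge (ErgCapAux.t_pos hx0)
      (ErgCapAux.t_lt_one x).le hMN
    rw [div_le_div_iff_of_pos_right (ErgCapAux.denom_pos hρ hx0)]
    linarith
  · -- Concave
    refine ⟨convex_Ioi 0, ?_⟩
    intro M hM N hN a b ha hb hab
    have hM0 : (0:ℝ) < M := hM
    have hN0 : (0:ℝ) < N := hN
    simp only [smul_eq_mul]
    have hMN0 : 0 < a * M + b * N := by
      rcases eq_or_lt_of_le ha with h|h
      · have hb1 : b = 1 := by linarith
        rw [← h, hb1]; simpa using hN0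
      · nlinarith [mul_nonneg hb hN0.le]
    have hIM := ErgCapAux.integrable_fN hρ hM0.le (ρ := ρ)
    have hIN := ErgCapAux.integrable_fN hρ hN0.le (ρ := ρ)
    have hIC := ErgCapAux.integrable_fN hρ hMN0.le (ρ := ρ)
    have hkey : a * (∫ x in Set.Ioi (0:ℝ), (1 - (1 - Real.exp (-x)) ^ M) / (1 + ρ * x))
        + b * (∫ x in Set.Ioi (0:ℝ), (1 - (1 - Real.exp (-x)) ^ N) / (1 + ρ * x))
        ≤ ∫ x in Set.Ioi (0:ℝ), (1 - (1 - Real.exp (-x)) ^ (a * M + b * N)) / (1 + ρ * x) := by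
      have hsplit : ∫ x in Set.Ioi (0:ℝ),
          (a * ((1 - (1 - Real.exp (-x)) ^ M) / (1 + ρ * x))
            + b * ((1 - (1 - Real.exp (-x)) ^ N) / (1 + ρ * x)))
          = a * (∫ x in Set.Ioi (0:ℝ), (1 - (1 - Real.exp (-x)) ^ M) / (1 + ρ * x))
            + b * (∫ x in Set.Ioi (0:ℝ), (1 - (1 - Real.exp (-x)) ^ N) / (1 + ρ * x)) := by
        rw [integral_add (hIM.const_mul a) (hIN.const_mul b), integral_const_mul,
          integral_const_mul]
      rw [← hsplit]
      apply setIntegral_mono_on ((hIM.const_mul a).add (hIN.const_mul b)) hIC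
        measurableSet_Ioi
      intro x hx
      have hx0 : (0:ℝ) < x := hx
      have ht0 := ErgCapAux.t_pos hx0
      have hd := ErgCapAux.denom_pos hρ hx0
      have hconvexp := convexOn_exp.2 (Set.mem_univ (Real.log (1 - Real.exp (-x)) * M))
        (Set.mem_univ (Real.log (1 - Real.exp (-x)) * N)) ha hb hab
      simp only [smul_eq_mul] at hconvexp
      have hrw : ∀ s : ℝ, (1 - Real.exp (-x)) ^ s
          = Real.exp (Real.log (1 - Real.exp (-x)) * s) := fun s =>
        Real.rpow_def_of_pos ht0 s
      have hexp : (1 - Real.exp (-x)) ^ (a * M + b * N)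
          ≤ a * (1 - Real.exp (-x)) ^ M + b * (1 - Real.exp (-x)) ^ N := by
        rw [hrw, hrw, hrw, show Real.log (1 - Real.exp (-x)) * (a * M + b * N)
          = a * (Real.log (1 - Real.exp (-x)) * M) + b * (Real.log (1 - Real.exp (-x)) * N)
          by ring]
        exact hconvexp
      have hform : a * ((1 - (1 - Real.exp (-x)) ^ M) / (1 + ρ * x))
          + b * ((1 - (1 - Real.exp (-x)) ^ N) / (1 + ρ * x))
          = (a * (1 - (1 - Real.exp (-x)) ^ M) + b * (1 - (1 - Real.exp (-x)) ^ N))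
            / (1 + ρ * x) := by ring
      refine le_trans (le_of_eq hform) ?_
      rw [div_le_div_iff_of_pos_right hd]
      nlinarith [hexp]
    rw [ergodicCapacity, ergodicCapacity, ergodicCapacity]
    calc a * (ρ * ∫ x in Set.Ioi (0:ℝ), (1 - (1 - Real.exp (-x)) ^ M) / (1 + ρ * x))
        + b * (ρ * ∫ x in Set.Ioi (0:ℝ), (1 - (1 - Real.exp (-x)) ^ N) / (1 + ρ * x))
        = ρ * (a * (∫ x in Set.Ioi (0:ℝ), (1 - (1 - Real.exp (-x)) ^ M) / (1 + ρ * x))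
          + b * (∫ x in Set.Ioi (0:ℝ), (1 - (1 - Real.exp (-x)) ^ N) / (1 + ρ * x))) := by
          ring
      _ ≤ ρ * ∫ x in Set.Ioi (0:ℝ), (1 - (1 - Real.exp (-x)) ^ (a * M + b * N))
            / (1 + ρ * x) := mul_le_mul_of_nonneg_left hkey hρ.le
  · -- Jensen
    intro a lam ha hsum1 hsumlam
    have hlam0 : 0 ≤ lam := hsumlam.nonneg fun k => mul_nonneg (Nat.cast_nonneg k) (ha k)
    rcases eq_or_lt_of_le hlam0 with hlam|hlam
    · -- lam = 0
      have hz : ∀ k : ℕ, a k * ergodicCapacity ρ (k : ℝ) = 0 := by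
        intro k
        rcases Nat.eq_zero_or_pos k with hk|hk
        · subst hk
          simp [ergodicCapacity, Real.rpow_zero]
        · have hle : (k:ℝ) * a k ≤ lam := le_hasSum hsumlam k
            (fun j _ => mul_nonneg (Nat.cast_nonneg j) (ha j))
          have hk0 : (0:ℝ) < (k:ℝ) := by exact_mod_cast hk
          have hak : a k = 0 := by nlinarith [ha k]
          rw [hak, zero_mul]
      calc ∑' k : ℕ, a k * ergodicCapacity ρ k = 0 := by
            rw [tsum_congr hz]; exact tsum_zero
        _ ≤ ergodicCapacity ρ lam := by
            rw [← hlam]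
            simp [ergodicCapacity, Real.rpow_zero]
    · -- lam > 0
      set D := ρ * ∫ x in Set.Ioi (0:ℝ),
        -Real.log (1 - Real.exp (-x)) * (1 - Real.exp (-x)) ^ lam / (1 + ρ * x) with hD
      have hterm : ∀ k : ℕ, a k * ergodicCapacity ρ (k:ℝ)
          ≤ a k * (ergodicCapacity ρ lam + ((k:ℝ) - lam) * D) := fun k =>
        mul_le_mul_of_nonneg_left
          (ErgCapAux.capacity_tangent hρ hlam (Nat.cast_nonneg k)) (ha k)
      have h1 : HasSum (fun k : ℕ => a k * ergodicCapacity ρ lam) (ergodicCapacity ρ lam) := by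
        simpa using hsum1.mul_right (ergodicCapacity ρ lam)
      have h2 : HasSum (fun k : ℕ => ((k:ℝ) * a k) * D) (lam * D) := hsumlam.mul_right D
      have h3 : HasSum (fun k : ℕ => a k * (lam * D)) (lam * D) := by
        simpa using hsum1.mul_right (lam * D)
      have hfin := h1.add (h2.sub h3)
      have heq : (fun k : ℕ => a k * ergodicCapacity ρ lam
          + (((k:ℝ) * a k) * D - a k * (lam * D)))
          = fun k : ℕ => a k * (ergodicCapacity ρ lam + ((k:ℝ) - lam) * D) := by
        funext k; ring
      rw [heq] at hfin
      have hval : ergodicCapacity ρ lam + (lam * D - lam * D) = ergodicCapacity ρ lam := by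
        ring
      rw [hval] at hfin
      have hLsum : Summable (fun k : ℕ => a k * ergodicCapacity ρ (k:ℝ)) := by
        apply Summable.of_nonneg_of_le
          (fun k => mul_nonneg (ha k) (ErgCapAux.capacity_nonneg hρ (Nat.cast_nonneg k)))
          hterm hfin.summable
      calc ∑' k : ℕ, a k * ergodicCapacity ρ k
          ≤ ∑' k : ℕ, a k * (ergodicCapacity ρ lam + ((k:ℝ) - lam) * D) :=
            Summable.tsum_le_tsum hterm hLsum hfin.summable
        _ = ergodicCapacity ρ lam := hfin.tsum_eq
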